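/- Let γ ∈ SL₂(ℤ) and let m ≥ 1 be an integer with γ^m equal to the identity matrix. Then m·Φ(γ) = 3·∑_{k=1}^{m−1} sign(c_γ · c_{γ^k} · c_{γ^{k+1}}), where c_g denotes the lower-left entry of a matrix g and sign(0) = 0. In particular Φ(γ) is rational. -/

import Mathlib

/-- The sawtooth function `((x)) = x - ⌊x⌋ - 1/2` for `x ∉ ℤ`, and `((x)) = 0` for `x ∈ ℤ`. -/
noncomputable def saw (x : ℚ) : ℚ := if x.den = 1 then 0 else x - ⌊x⌋ - 1 / 2

/-- The Dedekind sum `s(a, c) = ∑_{k=1}^{c-1} ((k/c)) ((k a/c))`. -/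
noncomputable def dedekindSum (a c : ℤ) : ℚ :=
  ∑ k ∈ Finset.Icc (1 : ℤ) (c - 1), saw ((k : ℚ) / (c : ℚ)) * saw ((k : ℚ) * (a : ℚ) / (c : ℚ))

/-- The Dedekind symbol `Φ` on `SL₂(ℤ)`. -/
noncomputable def dedekindPhi (γ : Matrix.SpecialLinearGroup (Fin 2) ℤ) : ℚ :=
  if (γ : Matrix (Fin 2) (Fin 2) ℤ) 1 0 = 0 then
    ((γ : Matrix (Fin 2) (Fin 2) ℤ) 0 1 : ℚ) / ((γ : Matrix (Fin 2) (Fin 2) ℤ) 1 1 : ℚ)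
  else
    (((γ : Matrix (Fin 2) (Fin 2) ℤ) 0 0 : ℚ) + ((γ : Matrix (Fin 2) (Fin 2) ℤ) 1 1 : ℚ)) /
        ((γ : Matrix (Fin 2) (Fin 2) ℤ) 1 0 : ℚ) -
      12 * (((γ : Matrix (Fin 2) (Fin 2) ℤ) 1 0).sign : ℚ) *
        dedekindSum ((γ : Matrix (Fin 2) (Fin 2) ℤ) 0 0) |(γ : Matrix (Fin 2) (Fin 2) ℤ) 1 0|

/-- The Rademacher symbol `Ψ(γ) = Φ(γ) - 3 sign(c (a + d))` on `SL₂(ℤ)`. -/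
noncomputable def rademacherPsi (γ : Matrix.SpecialLinearGroup (Fin 2) ℤ) : ℚ :=
  dedekindPhi γ -
    3 * (((γ : Matrix (Fin 2) (Fin 2) ℤ) 1 0 *
      ((γ : Matrix (Fin 2) (Fin 2) ℤ) 0 0 + (γ : Matrix (Fin 2) (Fin 2) ℤ) 1 1)).sign : ℚ)

lemma den_one_iff_fract (x : ℚ) : x.den = 1 ↔ Int.fract x = 0 := by
  constructor
  · intro h
    rw [← Rat.coe_int_num_of_den_eq_one h]
    exact Int.fract_intCast _
  · intro h
    have hx : x = (⌊x⌋ : ℚ) := by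
      have := Int.self_sub_fract x
      rw [h] at this; symm; simpa using this.symm
    rw [hx]; exact Rat.den_intCast _

lemma saw_eq_fract (x : ℚ) : saw x = if Int.fract x = 0 then 0 else Int.fract x - 1/2 := by
  unfold saw
  by_cases h : x.den = 1
  · rw [if_pos h, if_pos ((den_one_iff_fract x).mp h)]
  · rw [if_neg h, if_neg (fun h' => h ((den_one_iff_fract x).mpr h')), Int.fract]

lemma saw_add_int (x : ℚ) (j : ℤ) : saw (x + j) = saw x := by
  rw [saw_eq_fract, saw_eq_fract, Int.fract_add_intCast]

lemma saw_neg (x : ℚ) : saw (-x) = - saw x := by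
  rw [saw_eq_fract, saw_eq_fract]
  rcases eq_or_ne (Int.fract x) 0 with h | h
  · rw [h, Int.fract_neg_eq_zero.mpr h]; simp
  · rw [Int.fract_neg h]
    have h2 : (1 : ℚ) - Int.fract x ≠ 0 := by
      have := Int.fract_lt_one x
      intro h'; apply h; linarith
    rw [if_neg h, if_neg h2]; ring

noncomputable def Fs (n k : ℤ) : ℚ := saw ((k : ℚ) / (n : ℚ))

lemma Fs_congr (n : ℤ) (hn : 1 ≤ n) {x y : ℤ} (h : n ∣ x - y) : Fs n x = Fs n y := by
  obtain ⟨j, hj⟩ := h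
  have hx : x = y + n * j := by linarith
  have hn0 : (n : ℚ) ≠ 0 := by positivity
  have : (x : ℚ) / n = (y : ℚ) / n + (j : ℤ) := by
    rw [hx]; push_cast; field_simp
  rw [Fs, this, saw_add_int]; rfl

lemma Fs_neg (n k : ℤ) : Fs n (-k) = - Fs n k := by
  rw [Fs, Fs]; push_cast; rw [neg_div, saw_neg]

lemma Fs_val (n : ℤ) {k : ℤ} (h1 : 1 ≤ k) (h2 : k ≤ n - 1) :
    Fs n k = (k : ℚ) / n - 1 / 2 := by
  have hn : (2:ℤ) ≤ n := by omega
  have h0 : (0:ℚ) < (k:ℚ) / n := by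
    apply div_pos <;> [exact_mod_cast h1; exact_mod_cast (by omega : (0:ℤ) < n)]
  have h1' : (k:ℚ) / n < 1 := by
    rw [div_lt_one (by exact_mod_cast (by omega : (0:ℤ) < n))]
    exact_mod_cast (by omega : k < n)
  rw [Fs, saw_eq_fract, Int.fract_eq_self.mpr ⟨le_of_lt h0, h1'⟩, if_neg (ne_of_gt h0)]

lemma emod_mem (n : ℤ) (hn : 1 ≤ n) {k : ℤ} (hk : k ∈ Finset.Icc (1:ℤ) (n-1))
    (b b' : ℤ) (hbb : n ∣ b * b' - 1) : (k * b) % n ∈ Finset.Icc (1:ℤ) (n-1) := by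
    rw [Finset.mem_Icc] at hk ⊢
    have hn0 : 0 < n := by omega
    have h1 := Int.emod_nonneg (k * b) (by omega : n ≠ 0)
    have h2 := Int.emod_lt_of_pos (k * b) hn0
    have hne : (k * b) % n ≠ 0 := by
      intro h0
      have hd : n ∣ k * b := Int.dvd_of_emod_eq_zero h0
      have hd2 : n ∣ k * b * b' - k := by
        have e : k * b * b' - k = k * (b * b' - 1) := by ring
        rw [e]; exact Dvd.dvd.mul_left hbb k
      have hd3 : n ∣ k * b * b' := Dvd.dvd.mul_right hd b'
      have hk' : n ∣ k := by have := dvd_sub hd3 hd2; simpa using this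
      obtain ⟨q, hq⟩ := hk'
      rcases (by omega : q ≤ 0 ∨ 1 ≤ q) with h | h
      · nlinarith
      · nlinarith
    omega

lemma sum_reindex (n a a' : ℤ) (hn : 1 ≤ n) (h : n ∣ a * a' - 1) (H : ℤ → ℚ)
    (Hp : ∀ x y : ℤ, n ∣ x - y → H x = H y) :
    ∑ k ∈ Finset.Icc (1:ℤ) (n-1), H (k * a) = ∑ k ∈ Finset.Icc (1:ℤ) (n-1), H k := by
  have hinv : ∀ k ∈ Finset.Icc (1:ℤ) (n-1), ∀ b b' : ℤ, n ∣ b * b' - 1 →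
      ((k * b) % n * b') % n = k := by
    intro k hk b b' hbb
    rw [Finset.mem_Icc] at hk
    have e1 : ((k * b) % n * b') % n = (k * b * b') % n := by
      rw [Int.mul_emod, Int.emod_emod_of_dvd _ dvd_rfl, ← Int.mul_emod]
    have e2 : (k * b * b') % n = k % n := by
      have hd2 : n ∣ k * b * b' - k := by
        have e : k * b * b' - k = k * (b * b' - 1) := by ring
        rw [e]; exact Dvd.dvd.mul_left hbb k
      exact Int.emod_eq_emod_iff_emod_sub_eq_zero.mpr (Int.emod_eq_zero_of_dvd hd2)
    rw [e1, e2, Int.emod_eq_of_lt (by omega) (by omega)]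
  have h' : n ∣ a' * a - 1 := by have : a' * a - 1 = a * a' - 1 := by ring
                                 rw [this]; exact h
  refine Finset.sum_nbij' (i := fun k => (k * a) % n) (j := fun k => (k * a') % n) ?_ ?_ ?_ ?_ ?_
  · intro k hk; exact emod_mem n hn hk a a' h
  · intro k hk; exact emod_mem n hn hk a' a h'
  · intro k hk; exact hinv k hk a a' h
  · intro k hk; exact hinv k hk a' a h'
  · intro k hk
    apply Hp
    have h := Int.emod_def (k * a) n
    exact ⟨k * a / n, by rw [h]; ring⟩

lemma dedekindSum_eq (a n : ℤ) :
    dedekindSum a n = ∑ k ∈ Finset.Icc (1:ℤ) (n-1), Fs n k * Fs n (k * a) := by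
  refine Finset.sum_congr rfl fun k _ => ?_
  rw [Fs, Fs]
  norm_num

lemma prod_per (n a : ℤ) (hn : 1 ≤ n) :
    ∀ x y : ℤ, n ∣ x - y → Fs n x * Fs n (x * a) = Fs n y * Fs n (y * a) := by
  intro x y h
  rw [Fs_congr n hn h, Fs_congr n hn (show n ∣ x * a - y * a by
    obtain ⟨c, hc⟩ := h; exact ⟨c * a, by rw [show x*a - y*a = (x-y)*a by ring, hc]; ring⟩)]

lemma sq_per (n : ℤ) (hn : 1 ≤ n) :
    ∀ x y : ℤ, n ∣ x - y → Fs n x ^ 2 = Fs n y ^ 2 := by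
  intro x y h; rw [Fs_congr n hn h]

/-- Lemma A : `s(a,n) = 0` when `a² ≡ -1 (mod n)`. -/
lemma dedekindSum_eq_zero (n a : ℤ) (hn : 1 ≤ n) (h : n ∣ a * a + 1) :
    dedekindSum a n = 0 := by
  have hinv : n ∣ a * (-a) - 1 := by
    obtain ⟨c, hc⟩ := h; exact ⟨-c, by linarith⟩
  have key := sum_reindex n a (-a) hn hinv (fun k => Fs n k * Fs n (k * a)) (prod_per n a hn)
  have lhs : ∑ k ∈ Finset.Icc (1:ℤ) (n-1), Fs n (k * a) * Fs n (k * a * a)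
      = - ∑ k ∈ Finset.Icc (1:ℤ) (n-1), Fs n k * Fs n (k * a) := by
    rw [← Finset.sum_neg_distrib]
    refine Finset.sum_congr rfl fun k _ => ?_
    have : Fs n (k * a * a) = Fs n (-k) := by
      apply Fs_congr n hn
      obtain ⟨c, hc⟩ := h
      exact ⟨k * c, by rw [show k*a*a - -k = k*(a*a+1) by ring, hc]; ring⟩
    rw [this, Fs_neg]; ring
  rw [dedekindSum_eq]
  have := key
  rw [lhs] at this
  linarith [this]

lemma sum_id (N : ℕ) :
    ∑ k ∈ Finset.Icc (1:ℤ) (N:ℤ), (k:ℚ) = N * (N+1) / 2 := by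
  induction N with
  | zero => simp
  | succ N ih =>
    rw [show ((N+1 : ℕ) : ℤ) = (N:ℤ) + 1 from by push_cast; ring,
      show Finset.Icc (1:ℤ) ((N:ℤ)+1) = insert ((N:ℤ)+1) (Finset.Icc 1 (N:ℤ)) from by
        ext x; simp only [Finset.mem_Icc, Finset.mem_insert]; omega,
      Finset.sum_insert (by simp [Finset.mem_Icc]), ih]
    push_cast; ring

lemma sum_sq (N : ℕ) :
    ∑ k ∈ Finset.Icc (1:ℤ) (N:ℤ), (k:ℚ)^2 = N * (N+1) * (2*N+1) / 6 := by
  induction N with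
  | zero => simp
  | succ N ih =>
    rw [show ((N+1 : ℕ) : ℤ) = (N:ℤ) + 1 from by push_cast; ring,
      show Finset.Icc (1:ℤ) ((N:ℤ)+1) = insert ((N:ℤ)+1) (Finset.Icc 1 (N:ℤ)) from by
        ext x; simp only [Finset.mem_Icc, Finset.mem_insert]; omega,
      Finset.sum_insert (by simp [Finset.mem_Icc]), ih]
    push_cast; ring

lemma sum_D (n : ℤ) (hn : 1 ≤ n) :
    ∑ k ∈ Finset.Icc (1:ℤ) (n-1), Fs n k ^ 2 = (n-1) * (n-2) / (12 * n) := by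
  have hn0 : (n : ℚ) ≠ 0 := by positivity
  have e1 : ∑ k ∈ Finset.Icc (1:ℤ) (n-1), Fs n k ^ 2
      = ∑ k ∈ Finset.Icc (1:ℤ) (n-1), ((k:ℚ)^2 * (1/n^2) - (k:ℚ) * (1/n) + 1/4) := by
    refine Finset.sum_congr rfl fun k hk => ?_
    rw [Finset.mem_Icc] at hk
    rw [Fs_val n hk.1 hk.2]
    field_simp; ring
  rw [e1, Finset.sum_add_distrib, Finset.sum_sub_distrib, ← Finset.sum_mul, ← Finset.sum_mul,
    show n - 1 = ((n-1).toNat : ℤ) from by omega,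
    sum_sq ((n-1).toNat), sum_id ((n-1).toNat), Finset.sum_const]
  have hcard : ((Finset.Icc (1:ℤ) (((n-1).toNat : ℤ))).card : ℚ) = (n:ℚ) - 1 := by
    rw [Int.card_Icc]
    have h2 : ((((n-1).toNat:ℤ) + 1 - 1).toNat : ℤ) = n - 1 := by omega
    exact_mod_cast congrArg (fun z : ℤ => (z:ℚ)) h2
  rw [nsmul_eq_mul, hcard]
  have hge : ((((n:ℤ)-1).toNat : ℕ) : ℚ) = (n:ℚ) - 1 := by
    have : (((n-1).toNat:ℕ) : ℤ) = n - 1 := by omega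
    exact_mod_cast congrArg (fun z : ℤ => (z:ℚ)) this
  rw [hge]
  field_simp
  ring

/-- Lemma B : `s(a,n) = (n-1)/(12n)` when `a² + a + 1 ≡ 0 (mod n)`. -/
lemma dedekindSum_cubic (n a : ℤ) (hn : 1 ≤ n) (h : n ∣ a * a + a + 1) :
    dedekindSum a n = (n - 1) / (12 * n) := by
  rcases eq_or_lt_of_le hn with h1 | h2
  · rw [dedekindSum, ← h1]; norm_num
  have hn2 : 2 ≤ n := h2
  have hn0 : (n : ℚ) ≠ 0 := by positivity
  have hinv : n ∣ a * (a * a) - 1 := by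
    obtain ⟨c, hc⟩ := h
    exact ⟨(a-1)*c, by rw [show a*(a*a) - 1 = (a-1)*(a*a+a+1) by ring, hc]; ring⟩
  have hinv2 : n ∣ (a * a) * a - 1 := by rw [show (a*a)*a - 1 = a*(a*a) -1 by ring]; exact hinv
  set T := Finset.Icc (1:ℤ) (n-1) with hT
  set S := ∑ k ∈ T, Fs n k * Fs n (k * a) with hS
  set D := ∑ k ∈ T, Fs n k ^ 2 with hD
  -- pointwise square is 1/4
  have hpt : ∀ k ∈ T, (Fs n k + Fs n (k * a) + Fs n (k * (a*a)))^2 = 1/4 := by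
    intro k hk
    have hk2 := emod_mem n hn hk a (a*a) hinv
    have hk3 := emod_mem n hn hk (a*a) a hinv2
    have e2 : Fs n (k * a) = Fs n ((k*a) % n) := by
      apply Fs_congr n hn; exact ⟨k*a/n, by rw [Int.emod_def]; ring⟩
    have e3 : Fs n (k * (a*a)) = Fs n ((k*(a*a)) % n) := by
      apply Fs_congr n hn; exact ⟨k*(a*a)/n, by rw [Int.emod_def]; ring⟩
    rw [Finset.mem_Icc] at hk hk2 hk3
    rw [e2, e3, Fs_val n hk.1 hk.2, Fs_val n hk2.1 hk2.2, Fs_val n hk3.1 hk3.2]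
    set x1 : ℚ := (k:ℚ)/n - 1/2 with hx1
    set x2 : ℚ := (((k*a) % n : ℤ):ℚ)/n - 1/2 with hx2
    set x3 : ℚ := (((k*(a*a)) % n : ℤ):ℚ)/n - 1/2 with hx3
    -- the sum of the three residues is n or 2n
    have hdvd : n ∣ k + (k*a) % n + (k*(a*a)) % n := by
      have d2 : n ∣ (k*a) % n - k*a := ⟨-(k*a/n), by rw [Int.emod_def]; ring⟩
      have d3 : n ∣ (k*(a*a)) % n - k*(a*a) := ⟨-(k*(a*a)/n), by rw [Int.emod_def]; ring⟩
      have d4 : n ∣ k * (a*a+a+1) := Dvd.dvd.mul_left h k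
      have : k + (k*a) % n + (k*(a*a)) % n
          = k*(a*a+a+1) + ((k*a) % n - k*a) + ((k*(a*a)) % n - k*(a*a)) := by ring
      rw [this]
      exact dvd_add (dvd_add d4 d2) d3
    obtain ⟨q, hq⟩ := hdvd
    have hqv : q = 1 ∨ q = 2 := by
      rcases (by omega : q ≤ 0 ∨ q = 1 ∨ q = 2 ∨ 3 ≤ q) with h' | h' | h' | h'
      · nlinarith
      · tauto
      · tauto
      · nlinarith
    have hsum : ((k:ℚ) + ((k*a) % n : ℤ) + ((k*(a*a)) % n : ℤ)) = (n:ℚ) * q := by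
      exact_mod_cast congrArg (fun z : ℤ => (z:ℚ)) hq
    have hs3 : x1 + x2 + x3 = (q:ℚ) - 3/2 := by
      rw [hx1, hx2, hx3]
      rw [show k*(a*a) = k*a*a from by ring] at hsum ⊢
      field_simp
      linarith [hsum]
    rw [hs3]
    rcases hqv with h' | h' <;> rw [h'] <;> norm_num
  have hE : ∑ k ∈ T, (Fs n k + Fs n (k * a) + Fs n (k * (a*a)))^2 = ((n:ℚ)-1) / 4 := by
    rw [Finset.sum_congr rfl hpt, Finset.sum_const, nsmul_eq_mul]
    have hcard : ((T.card : ℚ)) = (n:ℚ) - 1 := by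
      rw [hT, Int.card_Icc]
      have : ((n - 1 + 1 - 1).toNat : ℤ) = n - 1 := by omega
      exact_mod_cast congrArg (fun z : ℤ => (z:ℚ)) this
    rw [hcard]; ring
  -- expansion
  have hexp : ∑ k ∈ T, (Fs n k + Fs n (k * a) + Fs n (k * (a*a)))^2
      = ∑ k ∈ T, Fs n k ^2 + ∑ k ∈ T, Fs n (k*a) ^2 + ∑ k ∈ T, Fs n (k*(a*a)) ^2
        + 2 * (∑ k ∈ T, Fs n k * Fs n (k*a) + ∑ k ∈ T, Fs n k * Fs n (k*(a*a))
          + ∑ k ∈ T, Fs n (k*a) * Fs n (k*(a*a))) := by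
    symm
    rw [← Finset.sum_add_distrib, ← Finset.sum_add_distrib, ← Finset.sum_add_distrib,
      ← Finset.sum_add_distrib, Finset.mul_sum, ← Finset.sum_add_distrib]
    refine Finset.sum_congr rfl fun k hk => ?_
    ring
  -- identify pieces
  have p1 : ∑ k ∈ T, Fs n (k*a) ^2 = D :=
    sum_reindex n a (a*a) hn hinv (fun k => Fs n k ^ 2) (sq_per n hn)
  have p2 : ∑ k ∈ T, Fs n (k*(a*a)) ^2 = D :=
    sum_reindex n (a*a) a hn hinv2 (fun k => Fs n k ^ 2) (sq_per n hn)
  have p3 : ∑ k ∈ T, Fs n k * Fs n (k*(a*a)) = S := by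
    have per : ∀ x y : ℤ, n ∣ x - y → Fs n x * Fs n (x * (a*a)) = Fs n y * Fs n (y * (a*a)) :=
      prod_per n (a*a) hn
    have key : ∑ k ∈ T, Fs n (k*a) * Fs n (k * a * (a*a))
        = ∑ k ∈ T, Fs n k * Fs n (k * (a*a)) :=
      sum_reindex n a (a*a) hn hinv (fun k => Fs n k * Fs n (k * (a*a))) per
    rw [← key]
    refine Finset.sum_congr rfl fun k _ => ?_
    have : Fs n (k * a * (a*a)) = Fs n k := by
      apply Fs_congr n hn
      obtain ⟨c, hc⟩ := hinv
      exact ⟨k*c, by rw [show k*a*(a*a) - k = k*(a*(a*a)-1) by ring, hc]; ring⟩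
    rw [this]
    ring
  have p4 : ∑ k ∈ T, Fs n (k*a) * Fs n (k*(a*a)) = S := by
    have key : ∑ k ∈ T, Fs n (k*a) * Fs n (k * a * a) = ∑ k ∈ T, Fs n k * Fs n (k * a) :=
      sum_reindex n a (a*a) hn hinv (fun k => Fs n k * Fs n (k * a)) (prod_per n a hn)
    rw [hS, ← key]
    refine Finset.sum_congr rfl fun k _ => ?_
    have : Fs n (k * a * a) = Fs n (k * (a*a)) := by apply Fs_congr n hn; exact ⟨0, by ring⟩
    rw [this]
  rw [hE, p1, p2, p3, p4, ← hD, ← hS] at hexp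
  have hDval := sum_D n hn
  rw [← hD] at hDval
  rw [dedekindSum_eq, ← hT, ← hS]
  rw [hDval] at hexp
  field_simp at hexp ⊢
  linarith [hexp]

lemma dedekindSum_neg (n a : ℤ) (hn : 1 ≤ n) : dedekindSum (-a) n = - dedekindSum a n := by
  rw [dedekindSum_eq, dedekindSum_eq, ← Finset.sum_neg_distrib]
  refine Finset.sum_congr rfl fun k _ => ?_
  rw [show k * -a = -(k*a) from by ring, Fs_neg]
  ring

def useq (t : ℤ) : ℕ → ℤ
  | 0 => 0
  | 1 => 1
  | (k+2) => t * useq t (k+1) - useq t k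

lemma useq_closed (t : ℤ) (f : ℕ → ℤ) (h0 : f 0 = 0) (h1 : f 1 = 1)
    (hrec : ∀ k, f (k+2) = t * f (k+1) - f k) : ∀ k, useq t k = f k := by
  have key : ∀ k, useq t k = f k ∧ useq t (k+1) = f (k+1) := by
    intro k
    induction k with
    | zero => exact ⟨by simp [useq, h0], by simp [useq, h1]⟩
    | succ k ih =>
      refine ⟨ih.2, ?_⟩
      show useq t (k+2) = f (k+2)
      rw [hrec, show useq t (k+2) = t * useq t (k+1) - useq t k from rfl, ih.1, ih.2]
  exact fun k => (key k).1

def f2 : ℕ → ℤ := fun k => k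

def fm2 : ℕ → ℤ := fun k => if k % 2 = 0 then -(k:ℤ) else k

def f0 : ℕ → ℤ := fun k => if k % 4 = 0 then 0 else if k % 4 = 1 then 1
  else if k % 4 = 2 then 0 else -1

def fm1 : ℕ → ℤ := fun k => if k % 3 = 0 then 0 else if k % 3 = 1 then 1 else -1

def f1 : ℕ → ℤ := fun k => if k % 6 = 0 then 0 else if k % 6 = 1 then 1
  else if k % 6 = 2 then 1 else if k % 6 = 3 then 0 else if k % 6 = 4 then -1 else -1

lemma useq_two : ∀ k, useq 2 k = f2 k :=
  useq_closed 2 f2 rfl rfl (fun k => by simp [f2]; push_cast; ring)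

lemma useq_neg_two : ∀ k, useq (-2) k = fm2 k := by
  refine useq_closed (-2) fm2 rfl rfl (fun k => ?_)
  rcases (by omega : k % 2 = 0 ∨ k % 2 = 1) with h | h <;>
    · simp only [fm2, show (k+2) % 2 = k % 2 from by omega, show (k+1) % 2 = 1 - k % 2 from by omega, h]
      norm_num
      push_cast
      ring

lemma useq_zero : ∀ k, useq 0 k = f0 k := by
  refine useq_closed 0 f0 rfl rfl (fun k => ?_)
  rcases (by omega : k % 4 = 0 ∨ k % 4 = 1 ∨ k % 4 = 2 ∨ k % 4 = 3) with h | h | h | h <;>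
    · simp only [f0, show (k+2) % 4 = (k % 4 + 2) % 4 from by omega,
        show (k+1) % 4 = (k % 4 + 1) % 4 from by omega, h]
      norm_num

lemma useq_neg_one : ∀ k, useq (-1) k = fm1 k := by
  refine useq_closed (-1) fm1 rfl rfl (fun k => ?_)
  rcases (by omega : k % 3 = 0 ∨ k % 3 = 1 ∨ k % 3 = 2) with h | h | h <;>
    · simp only [fm1, show (k+2) % 3 = (k % 3 + 2) % 3 from by omega,
        show (k+1) % 3 = (k % 3 + 1) % 3 from by omega, h]
      norm_num

lemma useq_one : ∀ k, useq 1 k = f1 k := by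
  refine useq_closed 1 f1 rfl rfl (fun k => ?_)
  rcases (by omega : k % 6 = 0 ∨ k % 6 = 1 ∨ k % 6 = 2 ∨ k % 6 = 3 ∨ k % 6 = 4 ∨ k % 6 = 5)
    with h | h | h | h | h | h <;>
    · simp only [f1, show (k+2) % 6 = (k % 6 + 2) % 6 from by omega,
        show (k+1) % 6 = (k % 6 + 1) % 6 from by omega, h]
      norm_num

lemma useq_ge (t : ℤ) (ht : 2 ≤ t) : ∀ k : ℕ, (k:ℤ) ≤ useq t k ∧ useq t k + 1 ≤ useq t (k+1) := by
  intro k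
  induction k with
  | zero => simp [useq]
  | succ k ih =>
    obtain ⟨h1, h2⟩ := ih
    refine ⟨by push_cast; omega, ?_⟩
    rw [show useq t (k+2) = t * useq t (k+1) - useq t k from rfl]
    nlinarith

lemma useq_flip (t : ℤ) : ∀ k, useq (-t) k = (if k % 2 = 0 then -1 else 1) * useq t k := by
  refine useq_closed (-t) (fun k => (if k % 2 = 0 then -1 else 1) * useq t k)
    (by simp [useq]) (by norm_num [useq]) (fun k => ?_)
  rcases (by omega : k % 2 = 0 ∨ k % 2 = 1) with h | h <;>
    · simp only [show (k+2) % 2 = k % 2 from by omega, show (k+1) % 2 = 1 - k % 2 from by omega, h,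
        show useq t (k+2) = t * useq t (k+1) - useq t k from rfl]
      norm_num
      try ring

lemma useq_ne_zero_of_two_le_abs (t : ℤ) (ht : 2 ≤ |t|) (m : ℕ) (hm : 1 ≤ m) :
    useq t m ≠ 0 := by
  have htt : 2 ≤ t ∨ t ≤ -2 := by rcases abs_cases t with ⟨h1, h2⟩ | ⟨h1, h2⟩ <;> omega
  rcases htt with h | h
  · have := (useq_ge t h m).1
    omega
  · have h2 : 2 ≤ -t := by omega
    have := (useq_ge (-t) h2 m).1
    have hf := useq_flip (-t) m
    rw [neg_neg] at hf
    rcases (by omega : m % 2 = 0 ∨ m % 2 = 1) with h' | h' <;> simp [h'] at hf <;> omega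

abbrev SL2 := Matrix.SpecialLinearGroup (Fin 2) ℤ

lemma sl2_det (γ : SL2) :
    (γ : Matrix (Fin 2) (Fin 2) ℤ) 0 0 * (γ : Matrix (Fin 2) (Fin 2) ℤ) 1 1
      - (γ : Matrix (Fin 2) (Fin 2) ℤ) 0 1 * (γ : Matrix (Fin 2) (Fin 2) ℤ) 1 0 = 1 := by
  have := γ.prop
  rwa [Matrix.det_fin_two] at this

lemma sl2_CH (γ : SL2) :
    (γ : Matrix (Fin 2) (Fin 2) ℤ) * (γ : Matrix (Fin 2) (Fin 2) ℤ)
      = ((γ : Matrix (Fin 2) (Fin 2) ℤ) 0 0 + (γ : Matrix (Fin 2) (Fin 2) ℤ) 1 1)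
          • (γ : Matrix (Fin 2) (Fin 2) ℤ) - 1 := by
  have hdet := sl2_det γ
  rw [← Matrix.ext_iff]
  simp only [Fin.forall_fin_two, Matrix.mul_apply, Fin.sum_univ_two, Matrix.sub_apply,
    Matrix.smul_apply, Matrix.one_apply, smul_eq_mul]
  norm_num
  refine ⟨⟨?_, ?_⟩, ?_, ?_⟩
  · linear_combination (-1 : ℤ) * hdet
  · ring
  · ring
  · linear_combination (-1 : ℤ) * hdet

lemma pow_mat (γ : SL2) (k : ℕ) :
    ((γ ^ (k+1) : SL2) : Matrix (Fin 2) (Fin 2) ℤ)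
      = useq ((γ : Matrix (Fin 2) (Fin 2) ℤ) 0 0 + (γ : Matrix (Fin 2) (Fin 2) ℤ) 1 1) (k+1)
          • (γ : Matrix (Fin 2) (Fin 2) ℤ)
        - useq ((γ : Matrix (Fin 2) (Fin 2) ℤ) 0 0 + (γ : Matrix (Fin 2) (Fin 2) ℤ) 1 1) k • 1 := by
  set M := (γ : Matrix (Fin 2) (Fin 2) ℤ) with hM
  set t := M 0 0 + M 1 1 with ht
  induction k with
  | zero =>
    show ((γ ^ 1 : SL2) : Matrix (Fin 2) (Fin 2) ℤ) = _
    rw [pow_one]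
    simp [useq]
    rfl
  | succ k ih =>
    have h1 : ((γ ^ (k+2) : SL2) : Matrix (Fin 2) (Fin 2) ℤ)
        = ((γ ^ (k+1) : SL2) : Matrix (Fin 2) (Fin 2) ℤ) * M := by
      rw [← Matrix.SpecialLinearGroup.coe_mul, ← pow_succ]
    rw [h1, ih, sub_mul, smul_mul_assoc, smul_mul_assoc, one_mul, sl2_CH γ, ← hM, ← ht,
      show useq t (k+2) = t * useq t (k+1) - useq t k from rfl]
    rw [smul_sub, smul_smul, sub_smul, mul_comm]
    abel

lemma entry_smul_sub (u v : ℤ) (N : Matrix (Fin 2) (Fin 2) ℤ) (i j : Fin 2) :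
    (u • N - v • (1 : Matrix (Fin 2) (Fin 2) ℤ)) i j
      = u * N i j - v * (if i = j then 1 else 0) := by
  rw [Matrix.sub_apply, Matrix.smul_apply, Matrix.smul_apply, Matrix.one_apply]
  simp [smul_eq_mul]

/-- sum of a 3-periodic indicator-type function over `range (3q)`. -/
lemma sum_period3 (v : ℚ) (g : ℕ → ℚ) (hg : ∀ k, g k = if k % 3 = 1 then v else 0) (q : ℕ) :
    ∑ k ∈ Finset.range (3*q), g k = q * v := by
  induction q with
  | zero => simp
  | succ q ih =>
    rw [show 3 * (q+1) = (3*q) + 1 + 1 + 1 from by ring, Finset.sum_range_succ,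
      Finset.sum_range_succ, Finset.sum_range_succ, ih, hg, hg, hg,
      if_neg (by omega), if_pos (by omega), if_neg (by omega)]
    push_cast; ring

lemma sum_Ico_period3 (v : ℚ) (g : ℕ → ℚ) (hg : ∀ k, g k = if k % 3 = 1 then v else 0)
    (m : ℕ) (hm : 1 ≤ m) (h3 : m % 3 = 0) :
    ∑ k ∈ Finset.Ico 1 m, g k = (m : ℚ) / 3 * v := by
  obtain ⟨q, rfl⟩ : ∃ q, m = 3 * q := ⟨m / 3, by omega⟩
  have h0 : ∑ k ∈ Finset.range (3*q), g k = g 0 + ∑ k ∈ Finset.Ico 1 (3*q), g k := by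
    rw [Finset.range_eq_Ico, Finset.sum_eq_sum_Ico_succ_bot (by omega)]
  have hg0 : g 0 = 0 := by rw [hg]; norm_num
  have := sum_period3 v g hg q
  rw [h0, hg0, zero_add] at this
  rw [this]
  push_cast
  ring

/-- If `γ ∈ SL₂(ℤ)` satisfies `γ^m = 1` for some `m ≥ 1`, then
`m Φ(γ) = 3 ∑_{k=1}^{m-1} sign(c_γ c_{γ^k} c_{γ^{k+1}})`; in particular `Φ(γ)` is
a rational number. -/
theorem dedekindPhi_of_finite_order (γ : Matrix.SpecialLinearGroup (Fin 2) ℤ) (m : ℕ)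
    (hm : 1 ≤ m) (hγ : γ ^ m = 1) :
    (m : ℚ) * dedekindPhi γ =
      3 * ∑ k ∈ Finset.Ico 1 m,
        (((γ : Matrix (Fin 2) (Fin 2) ℤ) 1 0 *
          ((γ ^ k : Matrix.SpecialLinearGroup (Fin 2) ℤ) : Matrix (Fin 2) (Fin 2) ℤ) 1 0 *
          ((γ ^ (k + 1) : Matrix.SpecialLinearGroup (Fin 2) ℤ) : Matrix (Fin 2) (Fin 2) ℤ) 1 0).sign
            : ℚ) := by
  have hdet := sl2_det γ
  set M := (γ : Matrix (Fin 2) (Fin 2) ℤ) with hM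
  set a := M 0 0 with ha
  set b := M 0 1 with hb
  set c := M 1 0 with hc
  set d := M 1 1 with hd
  set t := a + d with ht
  -- the lower-left entry of powers
  have hlow : ∀ k : ℕ, 1 ≤ k → ((γ ^ k : SL2) : Matrix (Fin 2) (Fin 2) ℤ) 1 0 = useq t k * c := by
    intro k hk
    obtain ⟨j, rfl⟩ : ∃ j, k = j + 1 := ⟨k - 1, by omega⟩
    rw [pow_mat γ j, entry_smul_sub, if_neg (by decide), ← hM, ← ha, ← hc, ← hd, ← ht]
    ring
  -- entries of γ^m = 1
  have hmat := pow_mat γ (m-1)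
  rw [show m - 1 + 1 = m from by omega, hγ, Matrix.SpecialLinearGroup.coe_one] at hmat
  have humc : useq t m * c = 0 := by
    have h0 := congrFun (congrFun hmat 1) 0
    rw [entry_smul_sub, if_neg (by decide), Matrix.one_apply, if_neg (by decide),
      ← hM, ← ha, ← hc, ← hd, ← ht] at h0
    linarith [h0]
  have humb : useq t m * b = 0 := by
    have h0 := congrFun (congrFun hmat 0) 1
    rw [entry_smul_sub, if_neg (by decide), Matrix.one_apply, if_neg (by decide),
      ← hM, ← ha, ← hb, ← hd, ← ht] at h0
    linarith [h0]
  rcases eq_or_ne c 0 with hc0 | hc0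
  · -- parabolic / central case : c = 0
    have had : a * d = 1 := by rw [hc0] at hdet; linarith
    have ht2 : t = 2 ∨ t = -2 := by
      rcases Int.mul_eq_one_iff_eq_one_or_neg_one.mp had with ⟨h1, h2⟩ | ⟨h1, h2⟩ <;>
        rw [ht, h1, h2] <;> norm_num
    have hum : useq t m ≠ 0 := by
      rcases ht2 with h | h
      · rw [h, useq_two]; simp [f2]; omega
      · rw [h, useq_neg_two]; unfold fm2
        rcases (by omega : m % 2 = 0 ∨ m % 2 = 1) with h' | h' <;> simp [h'] <;> omega
    have hb0 : b = 0 := by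
      rcases mul_eq_zero.mp humb with h | h
      · exact absurd h hum
      · exact h
    have lhs0 : dedekindPhi γ = 0 := by
      rw [dedekindPhi, if_pos (by rw [← hM, ← hc]; exact hc0)]
      rw [← hM, ← hb, hb0]
      norm_num
    rw [lhs0, mul_zero]
    have rhs0 : ∀ k ∈ Finset.Ico 1 m,
        ((c * ((γ ^ k : SL2) : Matrix (Fin 2) (Fin 2) ℤ) 1 0 *
          ((γ ^ (k+1) : SL2) : Matrix (Fin 2) (Fin 2) ℤ) 1 0).sign : ℚ) = 0 := by
      intro k _
      rw [hc0]
      norm_num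
    rw [Finset.sum_congr rfl rhs0]
    simp
  · -- elliptic case : c ≠ 0
    have hum : useq t m = 0 := by
      rcases mul_eq_zero.mp humc with h | h
      · exact h
      · exact absurd h hc0
    have htr : t = -1 ∨ t = 0 ∨ t = 1 := by
      by_contra hcon
      push_neg at hcon
      obtain ⟨h1, h2, h3⟩ := hcon
      exact useq_ne_zero_of_two_le_abs t (by rcases abs_cases t with ⟨p,q⟩|⟨p,q⟩ <;> omega) m hm hum
    have hcabs : 1 ≤ |c| := by rcases abs_cases c with ⟨p,q⟩|⟨p,q⟩ <;> omega
    -- rewrite the sum termwise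
    have hterm : ∀ k ∈ Finset.Ico 1 m,
        ((c * ((γ ^ k : SL2) : Matrix (Fin 2) (Fin 2) ℤ) 1 0 *
          ((γ ^ (k+1) : SL2) : Matrix (Fin 2) (Fin 2) ℤ) 1 0).sign : ℚ)
        = (c.sign : ℚ) * ((useq t k * useq t (k+1)).sign : ℚ) := by
      intro k hk
      rw [Finset.mem_Ico] at hk
      rw [hlow k hk.1, hlow (k+1) (by omega),
        show c * (useq t k * c) * (useq t (k+1) * c) = (useq t k * useq t (k+1)) * (c*(c*c)) from
          by ring,
        Int.sign_mul]
      have hccc : (c*(c*c)).sign = c.sign := by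
        rcases lt_trichotomy c 0 with h | h | h
        · rw [Int.sign_eq_neg_one_of_neg h,
            Int.sign_eq_neg_one_of_neg (mul_neg_of_neg_of_pos h (mul_pos_of_neg_of_neg h h))]
        · rw [h]; norm_num
        · rw [Int.sign_eq_one_of_pos h,
            Int.sign_eq_one_of_pos (mul_pos h (mul_pos h h))]
      rw [hccc]
      push_cast
      ring
    rw [Finset.sum_congr rfl hterm, ← Finset.mul_sum]
    -- now case on the trace
    rcases htr with ht1 | ht1 | ht1
    · -- t = -1 : order 3
      have hm3 : m % 3 = 0 := by
        have := useq_neg_one m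
        rw [ht1] at hum
        rw [hum] at this
        unfold fm1 at this
        rcases (by omega : m % 3 = 0 ∨ m % 3 = 1 ∨ m % 3 = 2) with h | h | h <;> simp [h] at this <;>
          first
            | rfl
            | omega
      have hsig : ∀ k : ℕ, ((useq t k * useq t (k+1)).sign : ℚ) = if k % 3 = 1 then (-1:ℚ) else 0 := by
        intro k
        rw [ht1, useq_neg_one, useq_neg_one]
        unfold fm1
        rcases (by omega : k % 3 = 0 ∨ k % 3 = 1 ∨ k % 3 = 2) with h | h | h <;>
          rw [show (k+1) % 3 = (k % 3 + 1) % 3 from by omega] <;> simp [h] <;> norm_num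
      rw [Finset.sum_congr rfl (fun k _ => hsig k), sum_Ico_period3 (-1) _ (fun k => rfl) m hm hm3]
      -- value of Φ
      have hd' : d = -1 - a := by have h' := ht1; rw [ht] at h'; omega
      have hs := dedekindSum_cubic |c| a hcabs ((abs_dvd _ _).mpr
        ⟨-b, by rw [hd'] at hdet; linear_combination -hdet⟩)
      have hphi : dedekindPhi γ = -(c.sign : ℚ) := by
        rw [dedekindPhi, if_neg (show ¬ ((γ : Matrix (Fin 2) (Fin 2) ℤ) 1 0 = 0) from hc0),
          ← hM, ← ha, ← hc, ← hd, hs]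
        have had : (a:ℚ) + (d:ℚ) = -1 := by
          have : a + d = -1 := by rw [← ht]; exact ht1
          exact_mod_cast congrArg (fun z : ℤ => (z:ℚ)) this
        rw [had]
        rcases lt_trichotomy c 0 with h | h | h
        · rw [abs_of_neg h, Int.sign_eq_neg_one_of_neg h]
          have hcq : (c:ℚ) < 0 := by exact_mod_cast h
          push_cast
          field_simp
          ring
        · exact absurd h hc0
        · rw [abs_of_pos h, Int.sign_eq_one_of_pos h]
          have hcq : (0:ℚ) < (c:ℚ) := by exact_mod_cast h
          push_cast
          field_simp
          ring
      rw [hphi]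
      ring
    · -- t = 0 : order 4
      have hsig : ∀ k : ℕ, ((useq t k * useq t (k+1)).sign : ℚ) = 0 := by
        intro k
        rw [ht1, useq_zero, useq_zero]
        unfold f0
        rcases (by omega : k % 4 = 0 ∨ k % 4 = 1 ∨ k % 4 = 2 ∨ k % 4 = 3) with h | h | h | h <;>
          rw [show (k+1) % 4 = (k % 4 + 1) % 4 from by omega] <;> simp [h]
      rw [Finset.sum_congr rfl (fun k _ => hsig k)]
      have hd' : d = -a := by have h' := ht1; rw [ht] at h'; omega
      have hs := dedekindSum_eq_zero |c| a (hcabs) ((abs_dvd _ _).mpr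
        ⟨-b, by rw [hd'] at hdet; linear_combination -hdet⟩)
      have hphi : dedekindPhi γ = 0 := by
        rw [dedekindPhi, if_neg (show ¬ ((γ : Matrix (Fin 2) (Fin 2) ℤ) 1 0 = 0) from hc0),
          ← hM, ← ha, ← hc, ← hd, hs]
        have had : (a:ℚ) + (d:ℚ) = 0 := by
          have : a + d = 0 := by rw [← ht]; exact ht1
          exact_mod_cast congrArg (fun z : ℤ => (z:ℚ)) this
        rw [had]
        norm_num
      rw [hphi]
      simp
    · -- t = 1 : order 6
      have hm3 : m % 3 = 0 := by
        have := useq_one m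
        rw [ht1] at hum
        rw [hum] at this
        unfold f1 at this
        rcases (by omega : m % 6 = 0 ∨ m % 6 = 1 ∨ m % 6 = 2 ∨ m % 6 = 3 ∨ m % 6 = 4 ∨ m % 6 = 5)
          with h | h | h | h | h | h <;> simp [h] at this <;>
          omega
      have hsig : ∀ k : ℕ, ((useq t k * useq t (k+1)).sign : ℚ) = if k % 3 = 1 then (1:ℚ) else 0 := by
        intro k
        rw [ht1, useq_one, useq_one]
        unfold f1
        rcases (by omega : k % 6 = 0 ∨ k % 6 = 1 ∨ k % 6 = 2 ∨ k % 6 = 3 ∨ k % 6 = 4 ∨ k % 6 = 5)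
          with h | h | h | h | h | h <;>
          rw [show (k+1) % 6 = (k % 6 + 1) % 6 from by omega,
            show k % 3 = k % 6 % 3 from by omega] <;>
          simp [h] <;> norm_num
      rw [Finset.sum_congr rfl (fun k _ => hsig k), sum_Ico_period3 1 _ (fun k => rfl) m hm hm3]
      have hd' : d = 1 - a := by have h' := ht1; rw [ht] at h'; omega
      have hs' := dedekindSum_cubic |c| (-a) hcabs ((abs_dvd _ _).mpr
        ⟨-b, by rw [hd'] at hdet; linear_combination -hdet⟩)
      have hs : dedekindSum a |c| = -((|c| - 1) / (12 * |c|) : ℚ) := by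
        have := dedekindSum_neg |c| (-a) hcabs
        rw [neg_neg] at this
        rw [this, hs']
      have hphi : dedekindPhi γ = (c.sign : ℚ) := by
        rw [dedekindPhi, if_neg (show ¬ ((γ : Matrix (Fin 2) (Fin 2) ℤ) 1 0 = 0) from hc0),
          ← hM, ← ha, ← hc, ← hd, hs]
        have had : (a:ℚ) + (d:ℚ) = 1 := by
          have : a + d = 1 := by rw [← ht]; exact ht1
          exact_mod_cast congrArg (fun z : ℤ => (z:ℚ)) this
        rw [had]
        rcases lt_trichotomy c 0 with h | h | h
        · rw [abs_of_neg h, Int.sign_eq_neg_one_of_neg h]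
          have hcq : (c:ℚ) < 0 := by exact_mod_cast h
          push_cast
          field_simp
          ring
        · exact absurd h hc0
        · rw [abs_of_pos h, Int.sign_eq_one_of_pos h]
          have hcq : (0:ℚ) < (c:ℚ) := by exact_mod_cast h
          push_cast
          field_simp
          ring
      rw [hphi]
      ring
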